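/- Let t be a target distribution with finite or countably infinite support of cardinality n, and let M be a positive integer with M < n. Then there exists an M-type distribution p minimizing ‖p − t‖₁ over all M-type distributions such that, denoting by k the support size of p, the support of p is {1, …, k}, T_k ≤ k/M, and ‖p − t‖₁ ≤ (k/(2M)) · (1 + M T_k / k)² ≤ 2k/M. -/

import Mathlib

/-- Variational distance `‖p − t‖₁ = Σ_i |p_i − t_i|`. -/
noncomputable def vd (p t : ℕ → ℝ) : ℝ := ∑' i, |p i - t i|

/-- A target distribution: a probability distribution on the positive integers
(indexed here by ℕ) with nonincreasing entries. -/
def IsTargetDist (t : ℕ → ℝ) : Prop :=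
  (∀ i, 0 ≤ t i) ∧ (∀ i, t (i + 1) ≤ t i) ∧ HasSum t 1

/-- An `M`-type distribution: every entry is `c_i / M` for a nonnegative integer
`c_i ≤ M`, and the entries sum to one. -/
def IsMType (M : ℕ) (p : ℕ → ℝ) : Prop :=
  HasSum p 1 ∧ ∃ c : ℕ → ℕ, (∀ i, c i ≤ M) ∧ ∀ i, p i = (c i : ℝ) / M

/-- Tail mass `T_k = Σ_{i > k} t_i` (the first `k` indices are `0, …, k−1`). -/
noncomputable def tailMass (t : ℕ → ℝ) (k : ℕ) : ℝ := ∑' i, t (k + i)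


open Finset

/-- two-point exchange inequality -/
lemma abs_swap_ineq {a s r : ℝ} (ha : 0 ≤ a) (hr : 0 ≤ r) (hrs : r ≤ s) :
    |a - s| + r ≤ s + |a - r| := by
  rcases abs_cases (a - s) with h | h <;> rcases abs_cases (a - r) with h' | h' <;> linarith

/-- generic pair-exchange for finite sums -/
lemma sum_pair_exchange {β : Type*} [AddCommMonoid β] (s : Finset ℕ) (u w : ℕ → β)
    (i j : ℕ) (hij : i ≠ j) (hi : i ∈ s) (hj : j ∈ s)
    (h : ∀ x ∈ s, x ≠ i → x ≠ j → u x = w x) :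
    ∑ x ∈ s, u x + (w i + w j) = ∑ x ∈ s, w x + (u i + u j) := by
  have hjei : j ∈ s.erase i := Finset.mem_erase.2 ⟨fun hh => hij hh.symm, hj⟩
  have hu : ∑ x ∈ s, u x = u i + (u j + ∑ x ∈ (s.erase i).erase j, u x) := by
    rw [Finset.add_sum_erase _ u hjei, Finset.add_sum_erase _ u hi]
  have hw : ∑ x ∈ s, w x = w i + (w j + ∑ x ∈ (s.erase i).erase j, w x) := by
    rw [Finset.add_sum_erase _ w hjei, Finset.add_sum_erase _ w hi]
  have he : ∑ x ∈ (s.erase i).erase j, u x = ∑ x ∈ (s.erase i).erase j, w x := by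
    refine Finset.sum_congr rfl fun x hx => ?_
    have hx1 := Finset.mem_erase.1 hx
    have hx2 := Finset.mem_erase.1 hx1.2
    exact h x hx2.2 hx2.1 hx1.1
  rw [hu, hw, he]; abel

lemma summable_abs_sub {t q : ℕ → ℝ} (ht : Summable t) (hq : Summable q)
    (htnn : ∀ i, 0 ≤ t i) (hqnn : ∀ i, 0 ≤ q i) :
    Summable fun i => |q i - t i| := by
  refine Summable.of_nonneg_of_le (fun i => abs_nonneg _) (fun i => ?_) (hq.add ht)
  rcases abs_cases (q i - t i) with h | h <;> have := htnn i <;> have := hqnn i <;> linarith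

/-- vd of a finitely supported `q` against `t`. -/
lemma vd_eq_sum_add_tail {t q : ℕ → ℝ} (htnn : ∀ i, 0 ≤ t i) (ht : Summable t)
    (hq : Summable q) (hqnn : ∀ i, 0 ≤ q i) (k : ℕ) (hq0 : ∀ i, k ≤ i → q i = 0) :
    vd q t = ∑ i ∈ range k, |q i - t i| + tailMass t k := by
  have hS : Summable fun i => |q i - t i| := summable_abs_sub ht hq htnn hqnn
  have h1 := Summable.sum_add_tsum_nat_add (f := fun i => |q i - t i|) k hS
  have h2 : ∀ i : ℕ, |q (i + k) - t (i + k)| = t (k + i) := by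
    intro i
    rw [hq0 _ (Nat.le_add_left _ _), zero_sub, abs_neg, abs_of_nonneg (htnn _), add_comm]
  rw [vd, ← h1, tailMass]
  congr 1
  exact tsum_congr h2

/-- extract a finitely supported representation of an M-type distribution -/
lemma mtype_rep {M : ℕ} (hM : 0 < M) {q : ℕ → ℝ} (h : IsMType M q) :
    ∃ c : ℕ → ℕ, (∀ i, c i ≤ M) ∧ (∀ i, q i = (c i : ℝ) / M) ∧
      ∃ N, (∀ i, N ≤ i → c i = 0) ∧ ∑ i ∈ range N, c i = M := by
  obtain ⟨hsum, c, hb, hc⟩ := h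
  have hqS : Summable q := hsum.summable
  have hcS : Summable fun i => (c i : ℝ) := by
    have : (fun i => (c i : ℝ)) = fun i => (M : ℝ) * q i := by
      funext i; rw [hc i]; field_simp
    rw [this]; exact hqS.mul_left _
  have htend : Filter.Tendsto (fun i => (c i : ℝ)) Filter.atTop (nhds 0) :=
    hcS.tendsto_atTop_zero
  have hev : ∀ᶠ i in Filter.atTop, (c i : ℝ) < 1 :=
    htend.eventually_lt_const one_pos
  obtain ⟨N, hN⟩ := Filter.eventually_atTop.1 hev
  have hN0 : ∀ i, N ≤ i → c i = 0 := by
    intro i hi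
    have := hN i hi
    exact_mod_cast Nat.lt_one_iff.1 (by exact_mod_cast this)
  refine ⟨c, hb, hc, N, hN0, ?_⟩
  have hq0 : ∀ i ∉ range N, q i = 0 := by
    intro i hi
    rw [hc i, hN0 i (by simpa using hi)]; simp
  have h2 : HasSum q (∑ i ∈ range N, q i) := hasSum_sum_of_ne_finset_zero hq0
  have h3 : ∑ i ∈ range N, q i = 1 := h2.unique hsum
  have h4 : ∑ i ∈ range N, ((c i : ℝ) / M) = 1 := by
    rw [← h3]; exact Finset.sum_congr rfl fun i _ => (hc i).symm
  have h5 : ((∑ i ∈ range N, c i : ℕ) : ℝ) = M := by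
    rw [← Finset.sum_div] at h4
    push_cast
    field_simp at h4
    linarith [h4]
  exact_mod_cast h5

/-- build an M-type distribution from a finitely supported integer vector -/
lemma mtype_mk {M : ℕ} (hM : 0 < M) (c : ℕ → ℕ) (hb : ∀ i, c i ≤ M) (N : ℕ)
    (h0 : ∀ i, N ≤ i → c i = 0) (hs : ∑ i ∈ range N, c i = M) :
    IsMType M (fun i => (c i : ℝ) / M) := by
  refine ⟨?_, c, hb, fun i => rfl⟩
  have hq0 : ∀ i ∉ range N, (c i : ℝ) / M = 0 := by
    intro i hi; rw [h0 i (by simpa using hi)]; simp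
  have h2 : HasSum (fun i => (c i : ℝ) / M) (∑ i ∈ range N, (c i : ℝ) / M) :=
    hasSum_sum_of_ne_finset_zero hq0
  have h3 : ∑ i ∈ range N, (c i : ℝ) / M = 1 := by
    rw [← Finset.sum_div]
    have : ((∑ i ∈ range N, c i : ℕ) : ℝ) = (M : ℝ) := by exact_mod_cast hs
    push_cast at this
    rw [this]
    field_simp
  rwa [h3] at h2

/-- reduce support into `range M` without increasing vd -/
lemma reduce {t : ℕ → ℝ} (htnn : ∀ i, 0 ≤ t i) (hanti : Antitone t) (htS : Summable t)
    {M : ℕ} (hM : 0 < M) :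
    ∀ N : ℕ, ∀ c : ℕ → ℕ, (∀ i, c i ≤ M) → (∀ i, N ≤ i → c i = 0) →
      (∑ i ∈ range N, c i = M) →
      ∃ c' : ℕ → ℕ, (∀ i, c' i ≤ M) ∧ (∀ i, M ≤ i → c' i = 0) ∧
        (∑ i ∈ range M, c' i = M) ∧
        vd (fun i => (c' i : ℝ) / M) t ≤ vd (fun i => (c i : ℝ) / M) t := by
  intro N
  induction N using Nat.strong_induction_on with
  | _ N IH =>
  intro c hb h0 hs
  rcases le_or_gt N M with hNM | hMN
  · refine ⟨c, hb, fun i hi => h0 i (hNM.trans hi), ?_, le_rfl⟩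
    have := (Finset.sum_subset (Finset.range_subset_range.2 hNM)
      (fun x _ hx => h0 x (by simpa using hx)))
    omega
  · -- N > M
    obtain ⟨n, rfl⟩ : ∃ n, N = n + 1 := ⟨N - 1, by omega⟩
    have hMn : M ≤ n := by omega
    have hsucc := Finset.sum_range_succ c n
    by_cases hci : c n = 0
    · refine IH n (by omega) c hb (fun x hx => ?_) (by omega)
      rcases eq_or_lt_of_le hx with h | h
      · rw [← h]; exact hci
      · exact h0 x (by omega)
    · -- find a free slot j < M
      have hfree : ∃ j < M, c j = 0 := by
        by_contra hcon
        push_neg at hcon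
        have h1 : ∀ j ∈ range M, 1 ≤ c j := fun j hj =>
          Nat.one_le_iff_ne_zero.2 (hcon j (by simpa using hj))
        have h2 : M ≤ ∑ x ∈ range M, c x := by
          calc M = ∑ _x ∈ range M, 1 := by simp
          _ ≤ ∑ x ∈ range M, c x := Finset.sum_le_sum h1
        have h3 : ∑ x ∈ range (n+1), c x
            = ∑ x ∈ range M, c x + ∑ x ∈ Finset.Ico M (n+1), c x := by
          rw [Finset.range_eq_Ico, Finset.range_eq_Ico]
          exact (Finset.sum_Ico_consecutive c (Nat.zero_le M) (by omega : M ≤ n + 1)).symm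
        have h4 : c n ≤ ∑ x ∈ Finset.Ico M (n+1), c x :=
          Finset.single_le_sum (fun x _ => Nat.zero_le _) (by simp [Finset.mem_Ico]; omega)
        omega
      obtain ⟨j, hjM, hcj⟩ := hfree
      have hji : j ≠ n := by omega
      set c2 : ℕ → ℕ := Function.update (Function.update c n 0) j (c n) with hc2
      have hc2i : c2 n = 0 := by
        rw [hc2]; rw [Function.update_of_ne (by omega), Function.update_self]
      have hc2j : c2 j = c n := by rw [hc2, Function.update_self]
      have hc2x : ∀ x, x ≠ n → x ≠ j → c2 x = c x := by
        intro x hxi hxj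
        rw [hc2, Function.update_of_ne hxj, Function.update_of_ne hxi]
      have hb2 : ∀ x, c2 x ≤ M := by
        intro x
        rcases eq_or_ne x n with rfl | hxi
        · rw [hc2i]; exact Nat.zero_le _
        rcases eq_or_ne x j with rfl | hxj
        · rw [hc2j]; exact hb _
        · rw [hc2x x hxi hxj]; exact hb _
      have h02 : ∀ x, n ≤ x → c2 x = 0 := by
        intro x hx
        rcases eq_or_ne x n with rfl | hxi
        · exact hc2i
        · rw [hc2x x hxi (by omega)]
          exact h0 x (by omega)
      have hsum2 : ∑ x ∈ range (n+1), c2 x = M := by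
        have hEx := sum_pair_exchange (range (n+1)) c2 c n j (by omega)
          (by simp) (by simp; omega) (fun x _ hxi hxj => hc2x x hxi hxj)
        rw [hs, hc2i, hc2j] at hEx
        omega
      have hsum2' : ∑ x ∈ range n, c2 x = M := by
        have h6 := Finset.sum_range_succ c2 n
        have h5 : c2 n = 0 := hc2i
        omega
      have hvd : vd (fun x => (c2 x : ℝ) / M) t ≤ vd (fun x => (c x : ℝ) / M) t := by
        have hq2S : Summable (fun x => (c2 x : ℝ) / M) :=
          summable_of_ne_finset_zero (s := range (n+1))
            (fun x hx => by rw [h02 x (by simp at hx; omega)]; simp)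
        have hqS : Summable (fun x => (c x : ℝ) / M) :=
          summable_of_ne_finset_zero (s := range (n+1))
            (fun x hx => by rw [h0 x (by simpa using hx)]; simp)
        have hnn2 : ∀ x, 0 ≤ (c2 x : ℝ) / M := fun x => by positivity
        have hnn : ∀ x, 0 ≤ (c x : ℝ) / M := fun x => by positivity
        rw [vd_eq_sum_add_tail htnn htS hq2S hnn2 (n+1)
            (fun x hx => by rw [h02 x (by omega)]; simp),
          vd_eq_sum_add_tail htnn htS hqS hnn (n+1) (fun x hx => by rw [h0 x hx]; simp)]
        have hEx := sum_pair_exchange (range (n+1)) (fun x => |(c2 x : ℝ) / M - t x|)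
          (fun x => |(c x : ℝ) / M - t x|) n j (by omega) (by simp) (by simp; omega)
          (fun x _ hxi hxj => by simp only [hc2x x hxi hxj])
        have hkey : |(c2 n : ℝ) / M - t n| + |(c2 j : ℝ) / M - t j| ≤
            |(c n : ℝ) / M - t n| + |(c j : ℝ) / M - t j| := by
          rw [hc2i, hc2j, hcj]
          simp only [Nat.cast_zero, zero_div, zero_sub, abs_neg]
          rw [abs_of_nonneg (htnn n), abs_of_nonneg (htnn j)]
          have := abs_swap_ineq (a := (c n : ℝ) / M) (s := t j) (r := t n)
            (by positivity) (htnn n) (hanti (by omega : j ≤ n))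
          linarith
        linarith
      obtain ⟨c', hb', h0', hs', hvd'⟩ := IH n (by omega) c2 hb2 h02 hsum2'
      exact ⟨c', hb', h0', hs', hvd'.trans hvd⟩

/-- there is an `F`-subset of `range k` capturing at least its proportional share of `f` -/
lemma exists_subset_card_sum (k F : ℕ) (hk : 0 < k) (hF : F ≤ k) (f : ℕ → ℝ) :
    ∃ U : Finset ℕ, U ⊆ range k ∧ U.card = F ∧
      (F : ℝ) * ∑ i ∈ range k, f i ≤ (k : ℝ) * ∑ i ∈ U, f i := by
  haveI : NeZero k := ⟨hk.ne'⟩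
  set g : ZMod k → ℝ := fun x => f x.val with hg
  have hsum_univ : ∑ x : ZMod k, g x = ∑ i ∈ range k, f i := by
    refine Finset.sum_nbij' (fun x => x.val) (fun n => (n : ZMod k)) ?_ ?_ ?_ ?_ ?_
    · intro x _; simpa using x.val_lt
    · intro n _; simp
    · intro x _; simp [ZMod.natCast_zmod_val]
    · intro n hn; simp at hn; exact ZMod.val_cast_of_lt hn
    · intro x _; rfl
  set W : ZMod k → ℝ := fun x => ∑ d ∈ range F, g (x + d) with hW
  have htot : ∑ x : ZMod k, W x = (F : ℝ) * ∑ i ∈ range k, f i := by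
    rw [hW, Finset.sum_comm]
    have : ∀ d ∈ range F, ∑ x : ZMod k, g (x + (d : ZMod k)) = ∑ i ∈ range k, f i := by
      intro d _
      rw [← hsum_univ]
      exact Fintype.sum_equiv (Equiv.addRight (d : ZMod k)) _ _ (fun x => rfl)
    rw [Finset.sum_congr rfl this, Finset.sum_const, card_range, nsmul_eq_mul]
  have hpig : ∃ x : ZMod k, (F : ℝ) * ∑ i ∈ range k, f i ≤ (k : ℝ) * W x := by
    by_contra hcon
    push_neg at hcon
    have h1 : ∑ x : ZMod k, (k : ℝ) * W x < ∑ _x : ZMod k, (F : ℝ) * ∑ i ∈ range k, f i := by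
      apply Finset.sum_lt_sum_of_nonempty Finset.univ_nonempty (fun x _ => hcon x)
    rw [← Finset.mul_sum, htot, Finset.sum_const, nsmul_eq_mul] at h1
    simp [ZMod.card] at h1
  obtain ⟨x₀, hx₀⟩ := hpig
  have hinj : ∀ d1 ∈ range F, ∀ d2 ∈ range F,
      (x₀ + ((d1 : ℕ) : ZMod k)).val = (x₀ + ((d2 : ℕ) : ZMod k)).val → d1 = d2 := by
    intro d1 h1 d2 h2 he
    have : x₀ + (d1 : ZMod k) = x₀ + (d2 : ZMod k) := ZMod.val_injective k he
    have h3 : (d1 : ZMod k) = (d2 : ZMod k) := add_left_cancel this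
    have h4 := congrArg ZMod.val h3
    rwa [ZMod.val_cast_of_lt (by simp at h1; omega), ZMod.val_cast_of_lt (by simp at h2; omega)] at h4
  have hinj' : Set.InjOn (fun d : ℕ => (x₀ + (d : ZMod k)).val) (range F) := by
    intro d1 h1 d2 h2 he
    exact hinj d1 (by simpa using h1) d2 (by simpa using h2) he
  refine ⟨(range F).image (fun d : ℕ => (x₀ + (d : ZMod k)).val), ?_, ?_, ?_⟩
  · intro x hx
    simp only [Finset.mem_image] at hx
    obtain ⟨d, _, rfl⟩ := hx
    simpa using (x₀ + (d : ZMod k)).val_lt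
  · rw [Finset.card_image_of_injOn hinj', card_range]
  · rw [Finset.sum_image hinj]
    exact hx₀

/-- the rounding construction: approximate `y` (summing to `M - u`) by an integer vector
summing to `M` with ℓ¹ error at most `k/2 + u²/(2k)`. -/
lemma rounding (M k : ℕ) (hM : 0 < M) (hk : 0 < k) (y : ℕ → ℝ) (hy : ∀ i, 0 ≤ y i)
    (u : ℝ) (hu : 0 ≤ u) (hsum : ∑ i ∈ range k, y i = (M : ℝ) - u) :
    ∃ c : ℕ → ℕ, (∀ i, k ≤ i → c i = 0) ∧ (∑ i ∈ range k, c i = M) ∧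
      ∑ i ∈ range k, |(c i : ℝ) - y i| ≤ (k : ℝ) / 2 + u ^ 2 / (2 * k) := by
  classical
  set a : ℕ → ℕ := fun i => ⌊y i⌋₊ with ha
  set f : ℕ → ℝ := fun i => y i - a i with hf
  have hf0 : ∀ i, 0 ≤ f i := fun i => by
    simp only [hf, ha, sub_nonneg]; exact Nat.floor_le (hy i)
  have hf1 : ∀ i, f i < 1 := fun i => by
    simp only [hf, ha, sub_lt_iff_lt_add]
    have := Nat.lt_floor_add_one (y i)
    linarith
  set A : ℕ := ∑ i ∈ range k, a i with hA
  have hAcast : (A : ℝ) = ∑ i ∈ range k, (a i : ℝ) := by push_cast [hA]; rfl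
  have hAle : (A : ℝ) ≤ (M : ℝ) - u := by
    rw [hAcast, ← hsum]
    exact Finset.sum_le_sum (fun i _ => Nat.floor_le (hy i))
  have hAleM : A ≤ M := by
    have : (A : ℝ) ≤ (M : ℝ) := by linarith
    exact_mod_cast this
  set F : ℕ := M - A with hF
  have hFcast : (F : ℝ) = (M : ℝ) - A := by
    rw [hF]; push_cast [hAleM]; ring
  have hfsum : ∑ i ∈ range k, f i = (F : ℝ) - u := by
    simp only [hf]
    rw [Finset.sum_sub_distrib, hsum, ← hAcast, hFcast]
    ring
  have hfsum_nonneg : (0:ℝ) ≤ (F : ℝ) - u := by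
    rw [← hfsum]; exact Finset.sum_nonneg (fun i _ => hf0 i)
  rcases le_or_gt k F with hkF | hFk
  · -- big F: round everything up, dump the rest on index 0
    set c : ℕ → ℕ := fun i => if i < k then a i + 1 + (if i = 0 then F - k else 0) else 0
      with hc
    have hsum_c : ∑ i ∈ range k, c i = M := by
      have h1 : ∀ i ∈ range k, c i = (a i + 1) + (if i = 0 then F - k else 0) := by
        intro i hi; simp only [hc, if_pos (mem_range.1 hi)]
      rw [Finset.sum_congr rfl h1, Finset.sum_add_distrib, Finset.sum_add_distrib,
        Finset.sum_ite_eq' (range k) 0 (fun _ => F - k)]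
      simp only [Finset.sum_const, card_range, smul_eq_mul, mul_one, if_pos
        (mem_range.2 hk)]
      omega
    refine ⟨c, fun i hi => by simp only [hc]; rw [if_neg (by omega)], hsum_c, ?_⟩
    have herr : ∀ i ∈ range k, |(c i : ℝ) - y i| = (c i : ℝ) - y i := by
      intro i hi
      have hik := mem_range.1 hi
      have h2 : (a i : ℝ) + 1 ≤ (c i : ℝ) := by
        simp only [hc, if_pos hik]; push_cast; split <;> simp <;> omega
      have h3 : y i < a i + 1 := Nat.lt_floor_add_one (y i)
      rw [abs_of_nonneg]; linarith
    rw [Finset.sum_congr rfl herr, Finset.sum_sub_distrib, hsum]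
    have : ((∑ i ∈ range k, c i : ℕ) : ℝ) = (M : ℝ) := by exact_mod_cast hsum_c
    push_cast at this ⊢
    rw [this]
    have hkpos : (0:ℝ) < k := by exact_mod_cast hk
    rw [← sub_nonneg]
    have hid : (k:ℝ)/2 + u^2/(2*k) - ((M:ℝ) - ((M:ℝ) - u)) = ((k:ℝ) - u)^2/(2*k) := by
      field_simp; ring
    rw [hid]; positivity
  · -- small F: round up a well-chosen F-subset
    obtain ⟨U, hUsub, hUcard, hUge⟩ := exists_subset_card_sum k F hk hFk.le f
    set c : ℕ → ℕ := fun i => if i < k then a i + (if i ∈ U then 1 else 0) else 0 with hc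
    have hsum_c : ∑ i ∈ range k, c i = M := by
      have h1 : ∀ i ∈ range k, c i = a i + (if i ∈ U then 1 else 0) := by
        intro i hi; simp only [hc, if_pos (mem_range.1 hi)]
      rw [Finset.sum_congr rfl h1, Finset.sum_add_distrib]
      have h2 : ∑ i ∈ range k, (if i ∈ U then 1 else 0) = F := by
        rw [Finset.sum_ite_mem, Finset.inter_eq_right.2 hUsub]
        simp [hUcard]
      omega
    refine ⟨c, fun i hi => by simp only [hc]; rw [if_neg (by omega)], hsum_c, ?_⟩
    have herr : ∀ i ∈ range k, |(c i : ℝ) - y i| =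
        (if i ∈ U then 1 - f i else f i) := by
      intro i hi
      have hik := mem_range.1 hi
      simp only [hc, if_pos hik]
      by_cases hiU : i ∈ U
      · rw [if_pos hiU, if_pos hiU]
        push_cast
        have h2 : y i - (a i : ℝ) < 1 := hf1 i
        rw [abs_of_nonneg (by linarith)]
        simp only [hf]; ring
      · rw [if_neg hiU, if_neg hiU]
        push_cast
        have h1 : (0:ℝ) ≤ y i - (a i : ℝ) := hf0 i
        rw [abs_of_nonpos (by linarith)]
        simp only [hf]; ring
    rw [Finset.sum_congr rfl herr]
    have hsplit : ∑ i ∈ range k, (if i ∈ U then 1 - f i else f i)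
        = ∑ i ∈ range k, f i + ∑ i ∈ range k, (if i ∈ U then 1 - 2 * f i else 0) := by
      rw [← Finset.sum_add_distrib]
      refine Finset.sum_congr rfl fun i _ => ?_
      split <;> ring
    rw [hsplit, Finset.sum_ite_mem, Finset.inter_eq_right.2 hUsub]
    have hUsum : ∑ i ∈ U, (1 - 2 * f i) = (F : ℝ) - 2 * ∑ i ∈ U, f i := by
      rw [Finset.sum_sub_distrib, ← Finset.mul_sum]
      simp [hUcard]
    rw [hUsum, hfsum]
    have hkpos : (0:ℝ) < k := by exact_mod_cast hk
    have hF0 : (0:ℝ) ≤ F := by positivity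
    -- goal: F - u + (F - 2 * ∑ U f) ≤ k/2 + u^2/(2k)
    have hUge' : (F : ℝ) * ((F:ℝ) - u) ≤ (k : ℝ) * ∑ i ∈ U, f i := by
      rw [← hfsum]; exact hUge
    refine le_of_mul_le_mul_right ?_ (by positivity : (0:ℝ) < 2 * k)
    have hRHS : ((k:ℝ)/2 + u^2/(2*k)) * (2*k) = (k:ℝ)^2 + u^2 := by
      field_simp
    rw [hRHS]
    nlinarith [sq_nonneg ((k:ℝ) + u - 2 * F), hUge']

/-- the bounded-by-M extension of a finite vector -/
def extv (M : ℕ) (v : Fin M → Fin (M + 1)) : ℕ → ℕ :=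
  fun i => if h : i < M then (v ⟨i, h⟩ : ℕ) else 0


lemma hexp_aux {kR MR T : ℝ} (hk : 0 < kR) (hM : 0 < MR) :
    kR / (2 * MR) * (1 + MR * T / kR) ^ 2 = (kR / 2 + (MR * T) ^ 2 / (2 * kR)) / MR + T := by
  field_simp
  ring

lemma final2_aux {kR MR T : ℝ} (hk : 0 < kR) (hM : 0 < MR) (hT0 : 0 ≤ T)
    (hMT : MR * T ≤ kR) : kR / (2 * MR) * (1 + MR * T / kR) ^ 2 ≤ 2 * kR / MR := by
  have hx1 : MR * T / kR ≤ 1 := by rw [div_le_one hk]; exact hMT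
  have hx0 : (0:ℝ) ≤ MR * T / kR := by positivity
  have h4 : (1 + MR * T / kR) ^ 2 ≤ 4 := by nlinarith
  calc kR / (2 * MR) * (1 + MR * T / kR) ^ 2 ≤ kR / (2 * MR) * 4 :=
      mul_le_mul_of_nonneg_left h4 (by positivity)
    _ = 2 * kR / MR := by field_simp; ring

/-- if `t` has support of cardinality `n > M` (expressed as `t` having
more than `M` positive entries, i.e. `0 < t M` in 0-based indexing), then there is a
variational-distance optimal `M`-type approximation `p` whose support is the first `k`
indices, with `T_k ≤ k/M` and `‖p − t‖₁ ≤ (k/(2M))(1 + M T_k/k)² ≤ 2k/M`. -/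
theorem stmt7 (t : ℕ → ℝ) (ht : IsTargetDist t) (M : ℕ) (hM : 0 < M)
    (hn : 0 < t M) :
    ∃ p : ℕ → ℝ, ∃ k : ℕ, IsMType M p ∧ (∀ q, IsMType M q → vd p t ≤ vd q t) ∧
      (∀ i, 0 < p i ↔ i < k) ∧
      tailMass t k ≤ (k : ℝ) / M ∧
      vd p t ≤ ((k : ℝ) / (2 * M)) * (1 + M * tailMass t k / k) ^ 2 ∧
      ((k : ℝ) / (2 * M)) * (1 + M * tailMass t k / k) ^ 2 ≤ 2 * k / M := by
  classical
  obtain ⟨htnn, hstep, hsum1⟩ := ht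
  have htS : Summable t := hsum1.summable
  have hanti : Antitone t := antitone_nat_of_succ_le hstep
  have hMR : (0 : ℝ) < M := by exact_mod_cast hM
  have htpos : ∀ i, i ≤ M → 0 < t i := fun i hi => lt_of_lt_of_le hn (hanti hi)
  -- the finite class of candidates
  set S : Finset (Fin M → Fin (M + 1)) :=
    Finset.univ.filter (fun v => ∑ i ∈ range M, extv M v i = M) with hSdef
  have hSmem : ∀ v, v ∈ S ↔ ∑ i ∈ range M, extv M v i = M := by
    intro v; rw [hSdef, Finset.mem_filter]; simp
  have hSne : S.Nonempty := by
    refine ⟨fun _ => ⟨1, by omega⟩, (hSmem _).2 ?_⟩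
    have h1 : ∀ i ∈ range M, extv M (fun _ => (⟨1, by omega⟩ : Fin (M + 1))) i = 1 := by
      intro i hi; simp [extv, mem_range.1 hi]
    rw [Finset.sum_congr rfl h1]; simp
  set vdF : (Fin M → Fin (M + 1)) → ℝ :=
    fun v => ∑ i ∈ range M, |(extv M v i : ℝ) / M - t i| with hvdFdef
  obtain ⟨v₁, hv₁S, hmin1⟩ := S.exists_min_image vdF hSne
  set S' : Finset (Fin M → Fin (M + 1)) := S.filter (fun v => vdF v ≤ vdF v₁) with hS'def
  obtain ⟨v₀, hv₀S', hminΦ⟩ := S'.exists_min_image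
    (fun v => ∑ i ∈ range M, i * extv M v i) ⟨v₁, Finset.mem_filter.2 ⟨hv₁S, le_rfl⟩⟩
  have hv₀S : v₀ ∈ S := (Finset.mem_filter.1 hv₀S').1
  have hv₀min : ∀ v ∈ S, vdF v₀ ≤ vdF v :=
    fun v hv => le_trans (Finset.mem_filter.1 hv₀S').2 (hmin1 v hv)
  set c₀ : ℕ → ℕ := extv M v₀ with hc₀def
  have hb₀ : ∀ i, c₀ i ≤ M := by
    intro i
    rw [hc₀def, extv]
    split
    · exact Nat.lt_succ_iff.1 (Fin.is_lt _)
    · exact Nat.zero_le _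
  have h0₀ : ∀ i, M ≤ i → c₀ i = 0 := by
    intro i hi; rw [hc₀def, extv, dif_neg (by omega)]
  have hsum₀ : ∑ i ∈ range M, c₀ i = M := (hSmem _).1 hv₀S
  set p : ℕ → ℝ := fun i => (c₀ i : ℝ) / M with hpdef
  have hpM : IsMType M p := mtype_mk hM c₀ hb₀ M h0₀ hsum₀
  -- vd of a class member
  have hvd_class : ∀ c : ℕ → ℕ, (∀ i, M ≤ i → c i = 0) →
      vd (fun i => (c i : ℝ) / M) t
        = ∑ i ∈ range M, |(c i : ℝ) / M - t i| + tailMass t M := by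
    intro c h0
    exact vd_eq_sum_add_tail htnn htS
      (summable_of_ne_finset_zero (s := range M)
        (fun x hx => by rw [h0 x (by simpa using hx)]; simp))
      (fun x => by positivity) M (fun i hi => by rw [h0 i hi]; simp)
  -- bridge from integer vectors to the finite class
  have hbridge : ∀ c : ℕ → ℕ, (∀ i, c i ≤ M) → (∀ i, M ≤ i → c i = 0) →
      (∑ i ∈ range M, c i = M) → ∃ v ∈ S, extv M v = c := by
    intro c hb h0 hs
    have hve : extv M (fun i => (⟨c i, Nat.lt_succ_of_le (hb i)⟩ : Fin (M + 1))) = c := by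
      funext i
      rw [extv]
      split
      · rfl
      · exact (h0 i (by omega)).symm
    exact ⟨_, (hSmem _).2 (by rw [hve]; exact hs), hve⟩
  have hvdF₀ : vdF v₀ = ∑ i ∈ range M, |(c₀ i : ℝ) / M - t i| := rfl
  -- optimality
  have hopt : ∀ q, IsMType M q → vd p t ≤ vd q t := by
    intro q hq
    obtain ⟨c, hb, hc, N, h0, hs⟩ := mtype_rep hM hq
    have hqe : q = fun i => (c i : ℝ) / M := funext hc
    obtain ⟨c', hb', h0', hs', hvd'⟩ := reduce htnn hanti htS hM N c hb h0 hs
    obtain ⟨v, hvS, hve⟩ := hbridge c' hb' h0' hs'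
    have h1 : vd p t ≤ vd (fun i => (c' i : ℝ) / M) t := by
      rw [hpdef, hvd_class c₀ h0₀, hvd_class c' h0']
      have h2 := hv₀min v hvS
      rw [hvdF₀, hvdFdef] at h2
      simp only [hve] at h2
      linarith
    rw [hqe]
    exact h1.trans hvd'
  -- define k
  have hex : ∃ j, c₀ j = 0 := ⟨M, h0₀ M le_rfl⟩
  set k : ℕ := Nat.find hex with hkdef
  have hck : c₀ k = 0 := Nat.find_spec hex
  have hlt : ∀ j, j < k → c₀ j ≠ 0 := fun j hj => Nat.find_min hex hj
  have hkM : k ≤ M := Nat.find_min' hex (h0₀ M le_rfl)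
  clear_value k
  -- no gaps in the support
  have hng : ∀ j i, j < i → i < M → c₀ j = 0 → c₀ i = 0 := by
    intro j i hji hiM hj
    by_contra hi
    set c2 : ℕ → ℕ := Function.update (Function.update c₀ i 0) j (c₀ i) with hc2
    have hc2i : c2 i = 0 := by
      rw [hc2, Function.update_of_ne (by omega), Function.update_self]
    have hc2j : c2 j = c₀ i := by rw [hc2, Function.update_self]
    have hc2x : ∀ x, x ≠ i → x ≠ j → c2 x = c₀ x := by
      intro x hxi hxj
      rw [hc2, Function.update_of_ne hxj, Function.update_of_ne hxi]
    have hb2 : ∀ x, c2 x ≤ M := by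
      intro x
      rcases eq_or_ne x i with rfl | hxi
      · rw [hc2i]; exact Nat.zero_le _
      rcases eq_or_ne x j with rfl | hxj
      · rw [hc2j]; exact hb₀ _
      · rw [hc2x x hxi hxj]; exact hb₀ _
    have h02 : ∀ x, M ≤ x → c2 x = 0 := by
      intro x hx
      rw [hc2x x (by omega) (by omega)]
      exact h0₀ x hx
    have hsum2 : ∑ x ∈ range M, c2 x = M := by
      have hEx := sum_pair_exchange (range M) c2 c₀ i j (by omega)
        (by simp; omega) (by simp; omega) (fun x _ hxi hxj => hc2x x hxi hxj)
      rw [hsum₀, hc2i, hc2j, hj] at hEx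
      omega
    obtain ⟨v2, hv2S, hv2e⟩ := hbridge c2 hb2 h02 hsum2
    have hvdle : vdF v2 ≤ vdF v₀ := by
      rw [hvdF₀, hvdFdef]
      simp only [hv2e]
      have hEx := sum_pair_exchange (range M) (fun x => |(c2 x : ℝ) / M - t x|)
        (fun x => |(c₀ x : ℝ) / M - t x|) i j (by omega) (by simp; omega) (by simp; omega)
        (fun x _ hxi hxj => by simp only [hc2x x hxi hxj])
      have hkey : |(c2 i : ℝ) / M - t i| + |(c2 j : ℝ) / M - t j| ≤
          |(c₀ i : ℝ) / M - t i| + |(c₀ j : ℝ) / M - t j| := by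
        rw [hc2i, hc2j, hj]
        simp only [Nat.cast_zero, zero_div, zero_sub, abs_neg]
        rw [abs_of_nonneg (htnn i), abs_of_nonneg (htnn j)]
        have := abs_swap_ineq (a := (c₀ i : ℝ) / M) (s := t j) (r := t i)
          (by positivity) (htnn i) (hanti (by omega : j ≤ i))
        linarith
      linarith
    have hv2S' : v2 ∈ S' := Finset.mem_filter.2
      ⟨hv2S, le_trans hvdle (Finset.mem_filter.1 hv₀S').2⟩
    have hΦ := hminΦ v2 hv2S'
    simp only [hv2e, ← hc₀def] at hΦ
    have hEx := sum_pair_exchange (range M) (fun x => x * c2 x) (fun x => x * c₀ x)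
      i j (by omega) (by simp; omega) (by simp; omega)
      (fun x _ hxi hxj => by simp only [hc2x x hxi hxj])
    simp only [hc2i, hc2j, hj] at hEx
    have hmul : j * c₀ i < i * c₀ i :=
      Nat.mul_lt_mul_of_lt_of_le hji (le_refl _) (Nat.pos_of_ne_zero hi)
    omega
  -- support characterization
  have hsupp : ∀ i, c₀ i ≠ 0 ↔ i < k := by
    intro i
    constructor
    · intro h
      by_contra hik
      push_neg at hik
      rcases eq_or_lt_of_le hik with h1 | h1
      · rw [h1] at hck; exact h hck
      · rcases lt_or_ge i M with h2 | h2
        · exact h (hng k i h1 h2 hck)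
        · exact h (h0₀ i h2)
    · exact fun h => hlt i h
  have hk1 : 0 < k := by
    rcases Nat.eq_zero_or_pos k with hk0 | hk0
    · exfalso
      have hz : ∑ i ∈ range M, c₀ i = 0 :=
        Finset.sum_eq_zero fun i _ => by
          by_contra h; exact absurd ((hsupp i).1 h) (by omega)
      omega
    · exact hk0
  have hsumk : ∑ i ∈ range k, c₀ i = M := by
    rw [← hsum₀]
    exact Finset.sum_subset (Finset.range_subset_range.2 hkM)
      (fun x _ hx => by
        by_contra h
        exact absurd ((hsupp x).1 h) (by simp at hx; omega))
  -- tail sum identity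
  have htail : ∑ i ∈ range k, t i = 1 - tailMass t k := by
    have h1 := Summable.sum_add_tsum_nat_add (f := t) k htS
    have h2 : ∑' i, t (i + k) = tailMass t k := by
      rw [tailMass]; exact tsum_congr fun i => by rw [add_comm]
    rw [hsum1.tsum_eq, h2] at h1
    linarith
  have hkR : (0 : ℝ) < k := by exact_mod_cast hk1
  -- M * T_k ≤ k
  have hMT : (M : ℝ) * tailMass t k ≤ k := by
    rcases eq_or_lt_of_le hkM with hkMeq | hkMlt
    · have hT1 : tailMass t k ≤ 1 := by
        have := Finset.sum_nonneg (fun i (_ : i ∈ range k) => htnn i)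
        linarith
      calc (M : ℝ) * tailMass t k ≤ M * 1 :=
            mul_le_mul_of_nonneg_left hT1 (le_of_lt hMR)
        _ = M := by ring
        _ = k := by rw [hkMeq]
    · -- k < M : use the optimality condition c₀ i ≤ M t i + 1
      have hB : ∀ i, i < k → (c₀ i : ℝ) ≤ M * t i + 1 := by
        intro i hik
        by_contra hgt
        push_neg at hgt
        have hc1R : (1 : ℝ) < (c₀ i : ℝ) := by nlinarith [htnn i]
        have hc2N : 2 ≤ c₀ i := by
          have h1 : 1 < c₀ i := by exact_mod_cast hc1R
          omega
        have hik_ne : i ≠ k := by omega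
        set c2 : ℕ → ℕ := Function.update (Function.update c₀ i (c₀ i - 1)) k 1 with hc2
        have hc2i : c2 i = c₀ i - 1 := by
          rw [hc2, Function.update_of_ne hik_ne, Function.update_self]
        have hc2k : c2 k = 1 := by rw [hc2, Function.update_self]
        have hc2x : ∀ x, x ≠ i → x ≠ k → c2 x = c₀ x := by
          intro x hxi hxk
          rw [hc2, Function.update_of_ne hxk, Function.update_of_ne hxi]
        have hb2 : ∀ x, c2 x ≤ M := by
          intro x
          rcases eq_or_ne x i with rfl | hxi
          · rw [hc2i]; have := hb₀ x; omega
          rcases eq_or_ne x k with rfl | hxk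
          · rw [hc2k]; omega
          · rw [hc2x x hxi hxk]; exact hb₀ _
        have h02 : ∀ x, M ≤ x → c2 x = 0 := by
          intro x hx
          rw [hc2x x (by omega) (by omega)]
          exact h0₀ x hx
        have hsum2 : ∑ x ∈ range M, c2 x = M := by
          have hEx := sum_pair_exchange (range M) c2 c₀ i k (by omega)
            (by simp; omega) (by simp; omega) (fun x _ hxi hxk => hc2x x hxi hxk)
          rw [hsum₀, hc2i, hc2k, hck] at hEx
          omega
        obtain ⟨v2, hv2S, hv2e⟩ := hbridge c2 hb2 h02 hsum2
        have h2 := hv₀min v2 hv2S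
        rw [hvdF₀, hvdFdef] at h2
        simp only [hv2e] at h2
        have hEx := sum_pair_exchange (range M) (fun x => |(c2 x : ℝ) / M - t x|)
          (fun x => |(c₀ x : ℝ) / M - t x|) i k (by omega) (by simp; omega) (by simp; omega)
          (fun x _ hxi hxk => by simp only [hc2x x hxi hxk])
        have htk : 0 < t k := htpos k (le_of_lt hkMlt)
        have hcast : ((c₀ i - 1 : ℕ) : ℝ) = (c₀ i : ℝ) - 1 := by
          push_cast [Nat.cast_sub (by omega : 1 ≤ c₀ i)]; ring
        have hgt' : t i < ((c₀ i : ℝ) - 1) / M := by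
          rw [lt_div_iff₀ hMR]; nlinarith
        have habs1 : |(c2 i : ℝ) / M - t i| = (c₀ i : ℝ) / M - t i - 1 / M := by
          rw [hc2i, hcast, abs_of_pos (by rw [sub_pos]; exact lt_of_lt_of_le hgt' (le_refl _))]
          ring
        have habs2 : |(c₀ i : ℝ) / M - t i| = (c₀ i : ℝ) / M - t i := by
          rw [abs_of_nonneg]
          have h3 : ((c₀ i : ℝ) - 1) / M ≤ (c₀ i : ℝ) / M :=
            (div_le_div_iff_of_pos_right hMR).2 (by linarith)
          linarith [hgt'.le.trans h3]
        have habs3 : |(c₀ k : ℝ) / M - t k| = t k := by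
          rw [hck]
          simp only [Nat.cast_zero, zero_div, zero_sub, abs_neg]
          exact abs_of_nonneg (htnn k)
        have hkey : |(c2 i : ℝ) / M - t i| + |(c2 k : ℝ) / M - t k| <
            |(c₀ i : ℝ) / M - t i| + |(c₀ k : ℝ) / M - t k| := by
          rw [habs1, habs2, habs3, hc2k]
          have h4 : |(1 : ℝ) / M - t k| < t k + 1 / M := by
            have h5 : (0 : ℝ) < 1 / M := by positivity
            rcases abs_cases ((1 : ℝ) / M - t k) with h | h <;> push_cast <;> linarith
          push_cast
          linarith
        linarith
      have hcastk : ∑ i ∈ range k, (c₀ i : ℝ) = M := by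
        exact_mod_cast hsumk
      have h3 : ∑ i ∈ range k, (c₀ i : ℝ) ≤ ∑ i ∈ range k, ((M : ℝ) * t i + 1) :=
        Finset.sum_le_sum (fun i hi => hB i (mem_range.1 hi))
      rw [hcastk, Finset.sum_add_distrib, ← Finset.mul_sum, htail] at h3
      have h4 : ∑ _i ∈ range k, (1 : ℝ) = k := by simp
      rw [h4] at h3
      nlinarith
  have hTk : tailMass t k ≤ (k : ℝ) / M := by
    rw [le_div_iff₀ hMR]
    nlinarith
  -- the rounding competitor
  have hT0 : (0 : ℝ) ≤ tailMass t k := tsum_nonneg fun i => htnn _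
  obtain ⟨c', h0k', hsk', herr⟩ := rounding M k hM hk1 (fun i => (M : ℝ) * t i)
    (fun i => mul_nonneg hMR.le (htnn i)) ((M : ℝ) * tailMass t k) (by positivity)
    (by rw [← Finset.mul_sum, htail]; ring)
  have hb' : ∀ i, c' i ≤ M := by
    intro i
    rcases lt_or_ge i k with h | h
    · calc c' i ≤ ∑ x ∈ range k, c' x :=
          Finset.single_le_sum (fun x _ => Nat.zero_le _) (mem_range.2 h)
        _ = M := hsk'
    · rw [h0k' i h]; exact Nat.zero_le _
  have h0M' : ∀ i, M ≤ i → c' i = 0 := fun i hi => h0k' i (le_trans hkM hi)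
  have hsM' : ∑ i ∈ range M, c' i = M := by
    have h5 := Finset.sum_subset (Finset.range_subset_range.2 hkM)
      (fun x (_ : x ∈ range M) hx => h0k' x (by simpa using hx))
    omega
  obtain ⟨v', hv'S, hv'e⟩ := hbridge c' hb' h0M' hsM'
  have hple : vd p t ≤ vd (fun i => (c' i : ℝ) / M) t := by
    rw [hpdef, hvd_class c₀ h0₀, hvd_class c' h0M']
    have h2 := hv₀min v' hv'S
    rw [hvdF₀, hvdFdef] at h2
    simp only [hv'e] at h2
    linarith
  have hvdq' : vd (fun i => (c' i : ℝ) / M) t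
      = ∑ i ∈ range k, |(c' i : ℝ) / M - t i| + tailMass t k :=
    vd_eq_sum_add_tail htnn htS
      (summable_of_ne_finset_zero (s := range k)
        (fun x hx => by rw [h0k' x (by simpa using hx)]; simp))
      (fun x => by positivity) k (fun i hi => by rw [h0k' i hi]; simp)
  have hsum_err : ∑ i ∈ range k, |(c' i : ℝ) / M - t i|
      = (∑ i ∈ range k, |(c' i : ℝ) - M * t i|) / M := by
    rw [Finset.sum_div]
    refine Finset.sum_congr rfl fun i _ => ?_
    rw [eq_div_iff hMR.ne', ← abs_of_pos hMR, ← abs_mul]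
    congr 1
    field_simp
    rw [abs_of_pos hMR]; ring
  have hfinal1 : vd p t ≤ (k : ℝ) / (2 * M) * (1 + M * tailMass t k / k) ^ 2 := by
    have hEb : (∑ i ∈ range k, |(c' i : ℝ) - M * t i|) / M
        ≤ ((k : ℝ) / 2 + ((M : ℝ) * tailMass t k) ^ 2 / (2 * k)) / M :=
      (div_le_div_iff_of_pos_right hMR).2 herr
    have hexp : (k : ℝ) / (2 * M) * (1 + M * tailMass t k / k) ^ 2
        = ((k : ℝ) / 2 + ((M : ℝ) * tailMass t k) ^ 2 / (2 * k)) / M + tailMass t k :=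
      hexp_aux hkR hMR
    rw [hexp]
    calc vd p t ≤ vd (fun i => (c' i : ℝ) / M) t := hple
      _ = ∑ i ∈ range k, |(c' i : ℝ) / M - t i| + tailMass t k := hvdq'
      _ = (∑ i ∈ range k, |(c' i : ℝ) - M * t i|) / M + tailMass t k := by rw [hsum_err]
      _ ≤ _ := by linarith
  have hfinal2 : (k : ℝ) / (2 * M) * (1 + M * tailMass t k / k) ^ 2 ≤ 2 * k / M :=
    final2_aux hkR hMR hT0 hMT
  refine ⟨p, k, hpM, hopt, ?_, hTk, hfinal1, hfinal2⟩
  intro i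
  rw [hpdef]
  simp only
  constructor
  · intro h
    apply (hsupp i).1
    intro h0
    rw [h0] at h
    simp at h
  · intro h
    have h1 : c₀ i ≠ 0 := (hsupp i).2 h
    have h2 : (0 : ℝ) < (c₀ i : ℝ) := by exact_mod_cast Nat.pos_of_ne_zero h1
    positivity
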